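/- Let g : ℝ → ℂ be continuously differentiable and 1-periodic, let 0 < δ ≤ 1, and let F ⊆ [0,1) be a finite set such that ‖ξ − ξ′‖ ≥ δ for all distinct ξ, ξ′ ∈ F, where ‖·‖ denotes the distance to the nearest integer. Then Σ_{ξ∈F} |g(ξ)| ≤ δ^{−1} ∫_0^1 |g(θ)| dθ + ∫_0^1 |g′(θ)| dθ. -/

import Mathlib

open Finset

/-- The distance from a real number to the nearest integer. -/
noncomputable def distNearestInt (t : ℝ) : ℝ := |t - round t|

lemma pointwise_bound (g : ℝ → ℂ) (hg : ContDiff ℝ 1 g) (ξ δ : ℝ) (hδ : 0 < δ) :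
    δ * ‖g ξ‖ ≤ (∫ θ in ξ..(ξ+δ), ‖g θ‖) + δ * ∫ θ in ξ..(ξ+δ), ‖deriv g θ‖ := by
  have hgc : Continuous g := hg.continuous
  have hg'c : Continuous (deriv g) := hg.continuous_deriv le_rfl
  set C := ∫ θ in ξ..(ξ+δ), ‖deriv g θ‖ with hC
  have hle : ξ ≤ ξ + δ := by linarith
  have key : ∀ θ ∈ Set.Icc ξ (ξ+δ), ‖g ξ‖ ≤ ‖g θ‖ + C := by
    intro θ hθ
    have hftc : ∫ t in ξ..θ, deriv g t = g θ - g ξ := by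
      apply intervalIntegral.integral_deriv_eq_sub
      · intro x _; exact (hg.differentiable one_ne_zero).differentiableAt
      · exact hg'c.intervalIntegrable _ _
    have h1 : ‖g ξ‖ ≤ ‖g θ‖ + ‖∫ t in ξ..θ, deriv g t‖ := by
      rw [hftc]
      calc ‖g ξ‖ = ‖g θ - (g θ - g ξ)‖ := by ring_nf
        _ ≤ ‖g θ‖ + ‖g θ - g ξ‖ := norm_sub_le _ _
    have h3 : ‖∫ t in ξ..θ, deriv g t‖ ≤ ∫ t in ξ..θ, ‖deriv g t‖ :=
      intervalIntegral.norm_integral_le_integral_norm hθ.1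
    have h4 : (∫ t in ξ..θ, ‖deriv g t‖) ≤ C := by
      apply intervalIntegral.integral_mono_interval le_rfl hθ.1 hθ.2
      · filter_upwards with x using norm_nonneg _
      · exact hg'c.norm.intervalIntegrable _ _
    linarith
  have hint : (∫ θ in ξ..(ξ+δ), ‖g ξ‖) ≤ ∫ θ in ξ..(ξ+δ), (‖g θ‖ + C) := by
    apply intervalIntegral.integral_mono_on hle
    · exact intervalIntegrable_const
    · exact (hgc.norm.add continuous_const).intervalIntegrable _ _
    · exact key
  rw [intervalIntegral.integral_const, intervalIntegral.integral_add
      (hgc.norm.intervalIntegrable _ _) intervalIntegrable_const,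
      intervalIntegral.integral_const] at hint
  simp only [smul_eq_mul, add_sub_cancel_left] at hint
  linarith

lemma sep_of_dist (δ x : ℝ) (hx : x ∈ Set.Ioo (0:ℝ) 1) (h : δ ≤ |x - round x|) :
    δ ≤ x ∧ x ≤ 1 - δ := by
  have hr := round_eq x
  have h0 := Int.floor_le (x + 1/2)
  have h1 := Int.lt_floor_add_one (x + 1/2)
  have : round x = 0 ∨ round x = 1 := by
    rcases hx with ⟨hx0, hx1⟩
    rw [hr]
    have hf0 : (0:ℤ) ≤ ⌊x + 1/2⌋ := by
      apply Int.le_floor.2; push_cast; linarith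
    have hf1 : ⌊x + 1/2⌋ < 2 := by
      apply Int.floor_lt.2; push_cast; linarith
    omega
  rcases hx with ⟨hx0, hx1⟩
  rcases this with h' | h'
  · rw [h'] at h hr
    rw [← hr] at h0 h1
    push_cast at h h0 h1
    rw [abs_of_nonneg (by linarith)] at h
    constructor <;> linarith
  · rw [h'] at h hr
    rw [← hr] at h0 h1
    push_cast at h h0 h1
    rw [abs_of_nonpos (by linarith)] at h
    constructor <;> linarith

/-- if `g` is continuously differentiable and 1-periodic and `F ⊆ [0,1)` is a
finite `δ`-separated set (in the distance to the nearest integer), then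
`∑_{ξ ∈ F} |g(ξ)| ≤ δ⁻¹ ∫_0^1 |g| + ∫_0^1 |g'|`. -/
theorem separated_points_sum_bound (g : ℝ → ℂ) (hg : ContDiff ℝ 1 g)
    (hper : Function.Periodic g 1) (δ : ℝ) (hδ0 : 0 < δ) (hδ1 : δ ≤ 1)
    (F : Finset ℝ) (hF : (F : Set ℝ) ⊆ Set.Ico 0 1)
    (hsep : ∀ ξ ∈ F, ∀ ξ' ∈ F, ξ ≠ ξ' → δ ≤ distNearestInt (ξ - ξ')) :
    ∑ ξ ∈ F, ‖g ξ‖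
      ≤ δ⁻¹ * (∫ θ in (0 : ℝ)..1, ‖g θ‖)
        + ∫ θ in (0 : ℝ)..1, ‖deriv g θ‖ := by
  have hgc : Continuous g := hg.continuous
  have hg'c : Continuous (deriv g) := hg.continuous_deriv le_rfl
  rcases F.eq_empty_or_nonempty with rfl | hne
  · simp only [Finset.sum_empty]
    have h1 : 0 ≤ ∫ θ in (0:ℝ)..1, ‖g θ‖ :=
      intervalIntegral.integral_nonneg (by norm_num) fun _ _ => norm_nonneg _
    have h2 : 0 ≤ ∫ θ in (0:ℝ)..1, ‖deriv g θ‖ :=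
      intervalIntegral.integral_nonneg (by norm_num) fun _ _ => norm_nonneg _
    positivity
  have hpn : Function.Periodic (fun θ => ‖g θ‖) 1 := fun x => by simp [hper x]
  have hp' : Function.Periodic (deriv g) 1 := by
    intro x
    have h : (fun y => g (y + 1)) = g := funext hper
    rw [← deriv_comp_add_const g 1 x, h]
  have hp'n : Function.Periodic (fun θ => ‖deriv g θ‖) 1 := fun x => by simp [hp' x]
  set a := F.min' hne with ha
  have haF : a ∈ F := F.min'_mem hne
  have hgap : ∀ ξ ∈ F, ∀ ξ' ∈ F, ξ < ξ' → δ ≤ ξ' - ξ ∧ ξ' - ξ ≤ 1 - δ := by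
    intro ξ hξ ξ' hξ' hlt
    have hx : ξ' - ξ ∈ Set.Ioo (0:ℝ) 1 := by
      constructor
      · linarith
      · have := (hF hξ').2; have := (hF hξ).1; linarith
    exact sep_of_dist δ _ hx (hsep ξ' hξ' ξ hξ (ne_of_gt hlt))
  have hrange : ∀ ξ ∈ F, a ≤ ξ ∧ ξ + δ ≤ a + 1 := by
    intro ξ hξ
    have h1 : a ≤ ξ := F.min'_le ξ hξ
    refine ⟨h1, ?_⟩
    rcases eq_or_lt_of_le h1 with rfl | hlt
    · linarith
    · have := (hgap a haF ξ hξ hlt).2; linarith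
  set S : ℝ → Set ℝ := fun ξ => Set.Ioc ξ (ξ + δ) with hS
  have hdisj : (F : Set ℝ).Pairwise (Function.onFun Disjoint S) := by
    intro ξ hξ ξ' hξ' hneq
    rcases lt_or_gt_of_ne hneq with hlt | hlt
    · have := (hgap ξ hξ ξ' hξ' hlt).1
      simp only [Function.onFun, hS]
      rw [Set.Ioc_disjoint_Ioc]
      calc min (ξ+δ) (ξ'+δ) ≤ ξ+δ := min_le_left _ _
        _ ≤ ξ' := by linarith
        _ ≤ max ξ ξ' := le_max_right _ _
    · have := (hgap ξ' hξ' ξ hξ hlt).1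
      simp only [Function.onFun, hS]
      rw [Set.Ioc_disjoint_Ioc]
      calc min (ξ+δ) (ξ'+δ) ≤ ξ'+δ := min_le_right _ _
        _ ≤ ξ := by linarith
        _ ≤ max ξ ξ' := le_max_left _ _
  have hkey : ∀ h : ℝ → ℝ, Continuous h → (∀ x, 0 ≤ h x) → Function.Periodic h 1 →
      ∑ ξ ∈ F, (∫ θ in ξ..(ξ+δ), h θ) ≤ ∫ θ in (0:ℝ)..1, h θ := by
    intro h hc hpos hp
    have he : ∀ ξ ∈ F, (∫ θ in ξ..(ξ+δ), h θ) = ∫ θ in S ξ, h θ := fun ξ _ =>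
      intervalIntegral.integral_of_le (by linarith)
    rw [Finset.sum_congr rfl he,
      ← MeasureTheory.integral_biUnion_finset F (fun i _ => measurableSet_Ioc) hdisj
        (fun i _ => hc.integrableOn_Ioc)]
    have hsub : (⋃ ξ ∈ F, S ξ) ⊆ Set.Ioc a (a+1) := by
      intro x hx
      simp only [Set.mem_iUnion] at hx
      obtain ⟨ξ, hξ, hxξ⟩ := hx
      obtain ⟨h1, h2⟩ := hrange ξ hξ
      exact ⟨lt_of_le_of_lt h1 hxξ.1, hxξ.2.trans h2⟩
    calc (∫ x in ⋃ ξ ∈ F, S ξ, h x) ≤ ∫ x in Set.Ioc a (a+1), h x := by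
          apply MeasureTheory.setIntegral_mono_set hc.integrableOn_Ioc
          · filter_upwards with x using hpos x
          · exact HasSubset.Subset.eventuallyLE hsub
      _ = ∫ θ in a..(a+1), h θ := (intervalIntegral.integral_of_le (by linarith)).symm
      _ = ∫ θ in (0:ℝ)..(0+1), h θ := hp.intervalIntegral_add_eq a 0
      _ = _ := by norm_num
  have h1 := hkey (fun θ => ‖g θ‖) hgc.norm (fun _ => norm_nonneg _) hpn
  have h2 := hkey (fun θ => ‖deriv g θ‖) hg'c.norm (fun _ => norm_nonneg _) hp'n
  have hsum : δ * ∑ ξ ∈ F, ‖g ξ‖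
      ≤ (∫ θ in (0:ℝ)..1, ‖g θ‖) + δ * ∫ θ in (0:ℝ)..1, ‖deriv g θ‖ := by
    rw [Finset.mul_sum]
    calc ∑ ξ ∈ F, δ * ‖g ξ‖
        ≤ ∑ ξ ∈ F, ((∫ θ in ξ..(ξ+δ), ‖g θ‖) + δ * ∫ θ in ξ..(ξ+δ), ‖deriv g θ‖) :=
          Finset.sum_le_sum fun ξ _ => pointwise_bound g hg ξ δ hδ0
      _ = (∑ ξ ∈ F, ∫ θ in ξ..(ξ+δ), ‖g θ‖) + δ * ∑ ξ ∈ F, ∫ θ in ξ..(ξ+δ), ‖deriv g θ‖ := by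
          rw [Finset.sum_add_distrib, Finset.mul_sum]
      _ ≤ _ := add_le_add h1 (mul_le_mul_of_nonneg_left h2 hδ0.le)
  rw [← mul_le_mul_iff_right₀ hδ0]
  calc δ * ∑ ξ ∈ F, ‖g ξ‖ ≤ _ := hsum
    _ = δ * (δ⁻¹ * (∫ θ in (0:ℝ)..1, ‖g θ‖) + ∫ θ in (0:ℝ)..1, ‖deriv g θ‖) := by
      field_simp
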